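/- Let A be a Hopf algebra over a field k and σ, σ̃ two convolution-invertible unital 2-cocycles on A. Then ρ := σ̃ * σ⁻¹ (convolution product) is a convolution-invertible unital 2-cocycle for the cocycle-deformed Hopf algebra A_σ, and (A_σ)_ρ = A_{σ̃} as Hopf algebras. -/

import Mathlib

/- STATEMENT 0: For a Hopf algebra `A` over a field `k` and a convolution-invertible
unital 2-cocycle `σ : A ⊗ A → k`, the deformed multiplication
`x ·_σ y = σ(x₁,y₁) x₂y₂ σ⁻¹(x₃,y₃)` is associative with unit `1`. -/

open TensorProduct

universe u

variable {k : Type u} [Field k]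

/-- Convolution product of two functionals on a coalgebra. -/
noncomputable def conv {C : Type u} [AddCommGroup C] [Module k C] [Coalgebra k C]
    (f g : C →ₗ[k] k) : C →ₗ[k] k :=
  LinearMap.mul' k k ∘ₗ TensorProduct.map f g ∘ₗ Coalgebra.comul

/-- `x ↦ φ(x₁) • μ(x₂)`. -/
noncomputable def convL {C A : Type u} [AddCommGroup C] [Module k C] [Coalgebra k C]
    [Ring A] [Algebra k A] (φ : C →ₗ[k] k) (μ : C →ₗ[k] A) : C →ₗ[k] A :=
  (TensorProduct.lid k A).toLinearMap ∘ₗ TensorProduct.map φ μ ∘ₗ Coalgebra.comul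

/-- `x ↦ φ(x₂) • μ(x₁)`. -/
noncomputable def convR {C A : Type u} [AddCommGroup C] [Module k C] [Coalgebra k C]
    [Ring A] [Algebra k A] (μ : C →ₗ[k] A) (φ : C →ₗ[k] k) : C →ₗ[k] A :=
  (TensorProduct.rid k A).toLinearMap ∘ₗ TensorProduct.map μ φ ∘ₗ Coalgebra.comul

/-- The deformed multiplication `x ⊗ y ↦ σ(x₁,y₁) x₂y₂ σ'(x₃,y₃)`. -/
noncomputable def deform {A : Type u} [Ring A] [HopfAlgebra k A]
    (σ : A ⊗[k] A →ₗ[k] k) (μ : A ⊗[k] A →ₗ[k] A) (σ' : A ⊗[k] A →ₗ[k] k) :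
    A ⊗[k] A →ₗ[k] A :=
  convR (convL σ μ) σ'

/-- The 2-cocycle condition `σ(x₁,y₁)σ(μ(x₂,y₂),z) = σ(y₁,z₁)σ(x,μ(y₂,z₂))`, stated for a
(possibly deformed) multiplication `μ` on `A`. -/
noncomputable def IsCocycle {A : Type u} [Ring A] [HopfAlgebra k A]
    (μ : A ⊗[k] A →ₗ[k] A) (σ : A ⊗[k] A →ₗ[k] k) : Prop :=
  conv (LinearMap.mul' k k ∘ₗ TensorProduct.map σ Coalgebra.counit)
      (σ ∘ₗ TensorProduct.map μ LinearMap.id) =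
    conv ((LinearMap.mul' k k ∘ₗ TensorProduct.map Coalgebra.counit σ) ∘ₗ
        (TensorProduct.assoc k A A A).toLinearMap)
      (σ ∘ₗ TensorProduct.map LinearMap.id μ ∘ₗ (TensorProduct.assoc k A A A).toLinearMap)

section Cmul

open Coalgebra LinearMap

variable {C B B' : Type u} [AddCommGroup C] [Module k C] [Coalgebra k C]
  [Ring B] [Algebra k B] [Ring B'] [Algebra k B']

/-- Convolution product with values in an algebra. -/
noncomputable def cmul (f g : C →ₗ[k] B) : C →ₗ[k] B :=
  LinearMap.mul' k B ∘ₗ TensorProduct.map f g ∘ₗ Coalgebra.comul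

lemma conv_eq_cmul (f g : C →ₗ[k] k) : conv f g = cmul f g := rfl

/-- `mul' ∘ map (ι∘φ) g = lid ∘ map φ g`. -/
lemma mul_map_unit_left (φ : C →ₗ[k] k) (g : C →ₗ[k] B) :
    LinearMap.mul' k B ∘ₗ TensorProduct.map (Algebra.linearMap k B ∘ₗ φ) g
      = (TensorProduct.lid k B).toLinearMap ∘ₗ TensorProduct.map φ g := by
  apply TensorProduct.ext'
  intro x y
  simp [Algebra.smul_def]

lemma mul_map_unit_right (φ : C →ₗ[k] k) (g : C →ₗ[k] B) :
    LinearMap.mul' k B ∘ₗ TensorProduct.map g (Algebra.linearMap k B ∘ₗ φ)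
      = (TensorProduct.rid k B).toLinearMap ∘ₗ TensorProduct.map g φ := by
  apply TensorProduct.ext'
  intro x y
  simp [Algebra.smul_def, Algebra.commutes]

lemma convL_eq_cmul {A : Type u} [Ring A] [HopfAlgebra k A] (φ : C →ₗ[k] k) (g : C →ₗ[k] A) :
    convL φ g = cmul (Algebra.linearMap k A ∘ₗ φ) g := by
  unfold convL cmul
  rw [← LinearMap.comp_assoc, ← LinearMap.comp_assoc, mul_map_unit_left]

lemma convR_eq_cmul {A : Type u} [Ring A] [HopfAlgebra k A] (φ : C →ₗ[k] k) (g : C →ₗ[k] A) :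
    convR g φ = cmul g (Algebra.linearMap k A ∘ₗ φ) := by
  unfold convR cmul
  rw [← LinearMap.comp_assoc, ← LinearMap.comp_assoc, mul_map_unit_right]

end Cmul
set_option linter.unusedSectionVars false
section Core
open Coalgebra LinearMap
variable {C B : Type u} [AddCommGroup C] [Module k C] [Coalgebra k C]
  [Ring B] [Algebra k B]

lemma cmul_assoc (f g h : C →ₗ[k] B) : cmul (cmul f g) h = cmul f (cmul g h) := by
  unfold cmul
  have e1 : TensorProduct.map (LinearMap.mul' k B ∘ₗ TensorProduct.map f g ∘ₗ Coalgebra.comul) h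
      = (TensorProduct.map (LinearMap.mul' k B ∘ₗ TensorProduct.map f g) h) ∘ₗ
        (Coalgebra.comul (R := k) (A := C)).rTensor C := by
    rw [LinearMap.rTensor, ← TensorProduct.map_comp, LinearMap.comp_id, LinearMap.comp_assoc]
  have e2 : TensorProduct.map f (LinearMap.mul' k B ∘ₗ TensorProduct.map g h ∘ₗ Coalgebra.comul)
      = (TensorProduct.map f (LinearMap.mul' k B ∘ₗ TensorProduct.map g h)) ∘ₗ
        (Coalgebra.comul (R := k) (A := C)).lTensor C := by
    rw [LinearMap.lTensor, ← TensorProduct.map_comp, LinearMap.comp_id, LinearMap.comp_assoc]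
  have key : (LinearMap.mul' k B ∘ₗ TensorProduct.map (LinearMap.mul' k B ∘ₗ TensorProduct.map f g) h)
      = (LinearMap.mul' k B ∘ₗ TensorProduct.map f (LinearMap.mul' k B ∘ₗ TensorProduct.map g h)) ∘ₗ
        (TensorProduct.assoc k C C C).toLinearMap := by
    apply TensorProduct.ext_threefold
    intro x y z
    simp [mul_assoc]
  rw [e1, e2]
  simp only [← LinearMap.comp_assoc]
  rw [key]
  simp only [LinearMap.comp_assoc]
  rw [← Coalgebra.coassoc_symm]
  simp only [← LinearMap.comp_assoc]
  congr 2
  simp only [LinearMap.comp_assoc]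
  rw [← LinearMap.comp_assoc]
  simp

end Core
section Unit
open Coalgebra LinearMap
variable {C B : Type u} [AddCommGroup C] [Module k C] [Coalgebra k C]
  [Ring B] [Algebra k B]

lemma cmul_one_left (f : C →ₗ[k] B) :
    cmul (Algebra.linearMap k B ∘ₗ Coalgebra.counit) f = f := by
  unfold cmul
  rw [← LinearMap.comp_assoc, mul_map_unit_left]
  have : TensorProduct.map Coalgebra.counit f
      = (f.lTensor k) ∘ₗ ((Coalgebra.counit (R := k) (A := C)).rTensor C) := by
    rw [LinearMap.lTensor, LinearMap.rTensor, ← TensorProduct.map_comp]; simp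
  rw [LinearMap.comp_assoc, this, LinearMap.comp_assoc, Coalgebra.rTensor_counit_comp_comul]
  apply LinearMap.ext; intro c
  simp

lemma cmul_one_right (f : C →ₗ[k] B) :
    cmul f (Algebra.linearMap k B ∘ₗ Coalgebra.counit) = f := by
  unfold cmul
  rw [← LinearMap.comp_assoc, mul_map_unit_right]
  have : TensorProduct.map f Coalgebra.counit
      = (f.rTensor k) ∘ₗ ((Coalgebra.counit (R := k) (A := C)).lTensor C) := by
    rw [LinearMap.lTensor, LinearMap.rTensor, ← TensorProduct.map_comp]; simp
  rw [LinearMap.comp_assoc, this, LinearMap.comp_assoc, Coalgebra.lTensor_counit_comp_comul]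
  apply LinearMap.ext; intro c
  simp

lemma counit_eq_unit_comp :
    (Coalgebra.counit : C →ₗ[k] k) = Algebra.linearMap k k ∘ₗ Coalgebra.counit := by
  apply LinearMap.ext; intro c; simp

lemma conv_counit_left (f : C →ₗ[k] k) : conv Coalgebra.counit f = f := by
  rw [conv_eq_cmul, counit_eq_unit_comp, cmul_one_left]

lemma conv_counit_right (f : C →ₗ[k] k) : conv f Coalgebra.counit = f := by
  rw [conv_eq_cmul, counit_eq_unit_comp, cmul_one_right]

end Unit
section Homs
open Coalgebra LinearMap
variable {C D B B' : Type u} [AddCommGroup C] [Module k C] [Coalgebra k C]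
  [AddCommGroup D] [Module k D] [Coalgebra k D]
  [Ring B] [Algebra k B] [Ring B'] [Algebra k B']

/-- Composing with a multiplicative map distributes over `cmul`. -/
lemma comp_cmul (F : B →ₗ[k] B')
    (hF : F ∘ₗ LinearMap.mul' k B = LinearMap.mul' k B' ∘ₗ TensorProduct.map F F)
    (f g : C →ₗ[k] B) : F ∘ₗ cmul f g = cmul (F ∘ₗ f) (F ∘ₗ g) := by
  unfold cmul
  rw [← LinearMap.comp_assoc, hF]
  simp only [LinearMap.comp_assoc]
  congr 1
  rw [← LinearMap.comp_assoc, ← TensorProduct.map_comp]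

/-- Pull a scalar-valued factor out on the left. -/
lemma comp_cmul_unit_left (F : B →ₗ[k] k) (ψ : C →ₗ[k] k) (g : C →ₗ[k] B) :
    F ∘ₗ cmul (Algebra.linearMap k B ∘ₗ ψ) g = conv ψ (F ∘ₗ g) := by
  unfold cmul conv
  simp only [← LinearMap.comp_assoc]
  congr 1
  apply TensorProduct.ext'; intro x y
  simp only [LinearMap.coe_comp, Function.comp_apply, TensorProduct.map_tmul,
    LinearMap.mul'_apply, Algebra.linearMap_apply, ← Algebra.smul_def]
  simp

lemma comp_cmul_unit_right (F : B →ₗ[k] k) (ψ : C →ₗ[k] k) (g : C →ₗ[k] B) :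
    F ∘ₗ cmul g (Algebra.linearMap k B ∘ₗ ψ) = conv (F ∘ₗ g) ψ := by
  unfold cmul conv
  simp only [← LinearMap.comp_assoc]
  congr 1
  apply TensorProduct.ext'; intro x y
  simp only [LinearMap.coe_comp, Function.comp_apply, TensorProduct.map_tmul,
    LinearMap.mul'_apply, Algebra.linearMap_apply, ← Algebra.commutes, ← Algebra.smul_def]
  simp [mul_comm]

/-- A linear map compatible with comultiplications. -/
def IsCoalgMap (P : D →ₗ[k] C) : Prop :=
  Coalgebra.comul ∘ₗ P = TensorProduct.map P P ∘ₗ Coalgebra.comul ∧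
  Coalgebra.counit ∘ₗ P = Coalgebra.counit

lemma cmul_comp (f g : C →ₗ[k] B) {P : D →ₗ[k] C} (hP : IsCoalgMap P) :
    cmul f g ∘ₗ P = cmul (f ∘ₗ P) (g ∘ₗ P) := by
  unfold cmul
  rw [LinearMap.comp_assoc, LinearMap.comp_assoc, hP.1, ← LinearMap.comp_assoc
    Coalgebra.comul (TensorProduct.map P P), ← TensorProduct.map_comp]

lemma conv_comp (f g : C →ₗ[k] k) {P : D →ₗ[k] C} (hP : IsCoalgMap P) :
    conv f g ∘ₗ P = conv (f ∘ₗ P) (g ∘ₗ P) := cmul_comp f g hP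

lemma IsCoalgMap.comp {E : Type u} [AddCommGroup E] [Module k E] [Coalgebra k E]
    {P : D →ₗ[k] C} {Q : E →ₗ[k] D} (hP : IsCoalgMap P) (hQ : IsCoalgMap Q) :
    IsCoalgMap (P ∘ₗ Q) := by
  constructor
  · rw [← LinearMap.comp_assoc, hP.1, LinearMap.comp_assoc, hQ.1, ← LinearMap.comp_assoc,
      ← TensorProduct.map_comp]
  · rw [← LinearMap.comp_assoc, hP.2, hQ.2]

end Homs
section TensorCoalg
open Coalgebra LinearMap
variable {C C' D D' B : Type u} [AddCommGroup C] [Module k C] [Coalgebra k C]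
  [AddCommGroup C'] [Module k C'] [Coalgebra k C']
  [AddCommGroup D] [Module k D] [Coalgebra k D]
  [AddCommGroup D'] [Module k D'] [Coalgebra k D']
  [Ring B] [Algebra k B]

lemma comul_tmul_def : (Coalgebra.comul (R := k) (A := C ⊗[k] D)) =
    (TensorProduct.tensorTensorTensorComm k C C D D).toLinearMap ∘ₗ
      TensorProduct.map Coalgebra.comul Coalgebra.comul := rfl

lemma counit_tmul_def : (Coalgebra.counit (R := k) (A := C ⊗[k] D)) =
    LinearMap.mul' k k ∘ₗ TensorProduct.map Coalgebra.counit Coalgebra.counit := by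
  apply TensorProduct.ext'; intro x y
  simp [TensorProduct.counit_tmul, mul_comm]

lemma isCM_id : IsCoalgMap (LinearMap.id : C →ₗ[k] C) := by
  constructor
  · simp [TensorProduct.map_id]
  · simp

lemma isCM_map {f : C →ₗ[k] C'} {g : D →ₗ[k] D'} (hf : IsCoalgMap f) (hg : IsCoalgMap g) :
    IsCoalgMap (TensorProduct.map f g) := by
  have nat : (TensorProduct.tensorTensorTensorComm k C' C' D' D').toLinearMap ∘ₗ
      TensorProduct.map (TensorProduct.map f f) (TensorProduct.map g g)
      = TensorProduct.map (TensorProduct.map f g) (TensorProduct.map f g) ∘ₗ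
        (TensorProduct.tensorTensorTensorComm k C C D D).toLinearMap := by
    apply TensorProduct.ext_fourfold'
    intro x y z w
    simp
  constructor
  · rw [comul_tmul_def, comul_tmul_def, LinearMap.comp_assoc, ← TensorProduct.map_comp,
      hf.1, hg.1, TensorProduct.map_comp, ← LinearMap.comp_assoc, nat, LinearMap.comp_assoc]
  · rw [counit_tmul_def, counit_tmul_def, LinearMap.comp_assoc, ← TensorProduct.map_comp,
      hf.2, hg.2]

lemma isCM_counit : IsCoalgMap (Coalgebra.counit : C →ₗ[k] k) := by
  constructor
  · have h1 : TensorProduct.map Coalgebra.counit (Coalgebra.counit (R := k) (A := C)) ∘ₗ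
        Coalgebra.comul = (Coalgebra.counit (R := k) (A := C)).lTensor k ∘ₗ
          ((Coalgebra.counit (R := k) (A := C)).rTensor C ∘ₗ Coalgebra.comul) := by
      rw [← LinearMap.comp_assoc, LinearMap.lTensor, LinearMap.rTensor,
        ← TensorProduct.map_comp]
      simp
    rw [h1, Coalgebra.rTensor_counit_comp_comul]
    apply LinearMap.ext; intro c
    simp [CommSemiring.comul_apply]
  · apply LinearMap.ext; intro c
    simp

lemma isCM_assoc : IsCoalgMap ((TensorProduct.assoc k C D D').toLinearMap) := by
  constructor
  · exact (CoalgHomClass.map_comp_comul (Coalgebra.TensorProduct.assoc k k C D D')).symm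
  · exact CoalgHomClass.counit_comp (Coalgebra.TensorProduct.assoc k k C D D')

lemma isCM_rid : IsCoalgMap ((TensorProduct.rid k C).toLinearMap) := by
  constructor
  · exact (CoalgHomClass.map_comp_comul (Coalgebra.TensorProduct.rid k k C)).symm
  · exact CoalgHomClass.counit_comp (Coalgebra.TensorProduct.rid k k C)

lemma isCM_lid : IsCoalgMap ((TensorProduct.lid k C).toLinearMap) := by
  constructor
  · exact (CoalgHomClass.map_comp_comul (Coalgebra.TensorProduct.lid k C)).symm
  · exact CoalgHomClass.counit_comp (Coalgebra.TensorProduct.lid k C)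

end TensorCoalg
section MapCmul
open Coalgebra LinearMap
variable {C B D : Type u} [AddCommGroup C] [Module k C] [Coalgebra k C]
  [Ring B] [Algebra k B] [Ring D] [Algebra k D] [Coalgebra k D]

lemma map_cmul_unit_right (f g : C →ₗ[k] B) :
    TensorProduct.map (cmul f g) (LinearMap.id : D →ₗ[k] D)
      = cmul (TensorProduct.map f (Algebra.linearMap k D ∘ₗ Coalgebra.counit))
             (TensorProduct.map g LinearMap.id) := by
  apply TensorProduct.ext'; intro c d
  have key : (LinearMap.mul' k (B ⊗[k] D)) ∘ₗ
      TensorProduct.map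
        (TensorProduct.map f (Algebra.linearMap k D ∘ₗ Coalgebra.counit))
        (TensorProduct.map g LinearMap.id) ∘ₗ
      (TensorProduct.tensorTensorTensorComm k C C D D).toLinearMap
      = TensorProduct.map (LinearMap.mul' k B ∘ₗ TensorProduct.map f g)
          ((TensorProduct.lid k D).toLinearMap ∘ₗ
            (Coalgebra.counit (R := k) (A := D)).rTensor D) := by
    apply TensorProduct.ext_fourfold'
    intro x y z w
    simp [Algebra.TensorProduct.tmul_mul_tmul, Algebra.smul_def]
  have h2 := LinearMap.congr_fun key ((Coalgebra.comul c) ⊗ₜ[k] (Coalgebra.comul d))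
  simp only [LinearMap.coe_comp, Function.comp_apply, LinearEquiv.coe_coe,
    TensorProduct.map_tmul, Coalgebra.rTensor_counit_comul, TensorProduct.lid_tmul,
    one_smul] at h2
  simp only [cmul, LinearMap.coe_comp, Function.comp_apply, LinearEquiv.coe_coe,
    TensorProduct.map_tmul]
  exact h2.symm

lemma map_cmul_unit_left (f g : C →ₗ[k] B) :
    TensorProduct.map (cmul f g) (LinearMap.id : D →ₗ[k] D)
      = cmul (TensorProduct.map f LinearMap.id)
             (TensorProduct.map g (Algebra.linearMap k D ∘ₗ Coalgebra.counit)) := by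
  apply TensorProduct.ext'; intro c d
  have key : (LinearMap.mul' k (B ⊗[k] D)) ∘ₗ
      TensorProduct.map
        (TensorProduct.map f LinearMap.id)
        (TensorProduct.map g (Algebra.linearMap k D ∘ₗ Coalgebra.counit)) ∘ₗ
      (TensorProduct.tensorTensorTensorComm k C C D D).toLinearMap
      = TensorProduct.map (LinearMap.mul' k B ∘ₗ TensorProduct.map f g)
          ((TensorProduct.rid k D).toLinearMap ∘ₗ
            (Coalgebra.counit (R := k) (A := D)).lTensor D) := by
    apply TensorProduct.ext_fourfold'
    intro x y z w
    simp [Algebra.TensorProduct.tmul_mul_tmul, Algebra.smul_def, Algebra.commutes]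
  have h2 := LinearMap.congr_fun key ((Coalgebra.comul c) ⊗ₜ[k] (Coalgebra.comul d))
  simp only [LinearMap.coe_comp, Function.comp_apply, LinearEquiv.coe_coe,
    TensorProduct.map_tmul, Coalgebra.lTensor_counit_comul, TensorProduct.rid_tmul,
    one_smul] at h2
  simp only [cmul, LinearMap.coe_comp, Function.comp_apply, LinearEquiv.coe_coe,
    TensorProduct.map_tmul]
  exact h2.symm

lemma map_id_cmul_unit_left (f g : C →ₗ[k] B) :
    TensorProduct.map (LinearMap.id : D →ₗ[k] D) (cmul f g)
      = cmul (TensorProduct.map (Algebra.linearMap k D ∘ₗ Coalgebra.counit) f)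
             (TensorProduct.map LinearMap.id g) := by
  apply TensorProduct.ext'; intro d c
  have key : (LinearMap.mul' k (D ⊗[k] B)) ∘ₗ
      TensorProduct.map
        (TensorProduct.map (Algebra.linearMap k D ∘ₗ Coalgebra.counit) f)
        (TensorProduct.map LinearMap.id g) ∘ₗ
      (TensorProduct.tensorTensorTensorComm k D D C C).toLinearMap
      = TensorProduct.map
          ((TensorProduct.lid k D).toLinearMap ∘ₗ
            (Coalgebra.counit (R := k) (A := D)).rTensor D)
          (LinearMap.mul' k B ∘ₗ TensorProduct.map f g) := by
    apply TensorProduct.ext_fourfold'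
    intro x y z w
    simp [Algebra.TensorProduct.tmul_mul_tmul, Algebra.smul_def]
  have h2 := LinearMap.congr_fun key ((Coalgebra.comul d) ⊗ₜ[k] (Coalgebra.comul c))
  simp only [LinearMap.coe_comp, Function.comp_apply, LinearEquiv.coe_coe,
    TensorProduct.map_tmul, Coalgebra.rTensor_counit_comul, TensorProduct.lid_tmul,
    one_smul] at h2
  simp only [cmul, LinearMap.coe_comp, Function.comp_apply, LinearEquiv.coe_coe,
    TensorProduct.map_tmul]
  exact h2.symm

lemma map_id_cmul_unit_right (f g : C →ₗ[k] B) :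
    TensorProduct.map (LinearMap.id : D →ₗ[k] D) (cmul f g)
      = cmul (TensorProduct.map LinearMap.id f)
             (TensorProduct.map (Algebra.linearMap k D ∘ₗ Coalgebra.counit) g) := by
  apply TensorProduct.ext'; intro d c
  have key : (LinearMap.mul' k (D ⊗[k] B)) ∘ₗ
      TensorProduct.map
        (TensorProduct.map LinearMap.id f)
        (TensorProduct.map (Algebra.linearMap k D ∘ₗ Coalgebra.counit) g) ∘ₗ
      (TensorProduct.tensorTensorTensorComm k D D C C).toLinearMap
      = TensorProduct.map
          ((TensorProduct.rid k D).toLinearMap ∘ₗ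
            (Coalgebra.counit (R := k) (A := D)).lTensor D)
          (LinearMap.mul' k B ∘ₗ TensorProduct.map f g) := by
    apply TensorProduct.ext_fourfold'
    intro x y z w
    simp [Algebra.TensorProduct.tmul_mul_tmul, Algebra.smul_def, Algebra.commutes]
  have h2 := LinearMap.congr_fun key ((Coalgebra.comul d) ⊗ₜ[k] (Coalgebra.comul c))
  simp only [LinearMap.coe_comp, Function.comp_apply, LinearEquiv.coe_coe,
    TensorProduct.map_tmul, Coalgebra.lTensor_counit_comul, TensorProduct.rid_tmul,
    one_smul] at h2
  simp only [cmul, LinearMap.coe_comp, Function.comp_apply, LinearEquiv.coe_coe,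
    TensorProduct.map_tmul]
  exact h2.symm

end MapCmul
section Hopf
open Coalgebra LinearMap
variable {A : Type u} [Ring A] [HopfAlgebra k A]

lemma hι_mul {B : Type u} [Ring B] [Algebra k B] :
    (Algebra.linearMap k B) ∘ₗ LinearMap.mul' k k
      = LinearMap.mul' k B ∘ₗ TensorProduct.map (Algebra.linearMap k B) (Algebra.linearMap k B) := by
  apply TensorProduct.ext'; intro x y; simp

lemma hε_mul : (Coalgebra.counit (R := k) (A := A)) ∘ₗ LinearMap.mul' k A
    = LinearMap.mul' k k ∘ₗ TensorProduct.map Coalgebra.counit Coalgebra.counit := by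
  apply TensorProduct.ext'; intro x y; simp

lemma hεμ_counit : (Coalgebra.counit (R := k) (A := A)) ∘ₗ LinearMap.mul' k A
    = (Coalgebra.counit (R := k) (A := A ⊗[k] A)) := by
  rw [counit_tmul_def]; exact hε_mul

lemma hΔ_mul : (Coalgebra.comul (R := k) (A := A)) ∘ₗ LinearMap.mul' k A
    = LinearMap.mul' k (A ⊗[k] A) ∘ₗ TensorProduct.map Coalgebra.comul Coalgebra.comul := by
  apply TensorProduct.ext'; intro x y; simp

lemma mul_ttc : LinearMap.mul' k (A ⊗[k] A)
    = TensorProduct.map (LinearMap.mul' k A) (LinearMap.mul' k A) ∘ₗ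
      (TensorProduct.tensorTensorTensorComm k A A A A).toLinearMap := by
  apply TensorProduct.ext_fourfold'; intro x y z w
  simp [Algebra.TensorProduct.tmul_mul_tmul]

lemma isCM_mul : IsCoalgMap (LinearMap.mul' k A) := by
  constructor
  · rw [hΔ_mul, comul_tmul_def, mul_ttc]
    simp only [LinearMap.comp_assoc]
  · exact hεμ_counit

/-- left inclusion `a ↦ a ⊗ 1`. -/
noncomputable def rincL : A →ₗ[k] A ⊗[k] A :=
  (Algebra.TensorProduct.includeLeft (R := k) (S := k) (A := A) (B := A)).toLinearMap

noncomputable def rincR : A →ₗ[k] A ⊗[k] A :=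
  (Algebra.TensorProduct.includeRight (R := k) (A := A) (B := A)).toLinearMap

@[simp] lemma rincL_apply (a : A) : rincL (k := k) a = a ⊗ₜ[k] 1 := rfl
@[simp] lemma rincR_apply (a : A) : rincR (k := k) a = 1 ⊗ₜ[k] a := rfl

lemma hrincL_mul : (rincL (k := k) (A := A)) ∘ₗ LinearMap.mul' k A
    = LinearMap.mul' k (A ⊗[k] A) ∘ₗ TensorProduct.map rincL rincL := by
  apply TensorProduct.ext'; intro x y; simp [Algebra.TensorProduct.tmul_mul_tmul]

lemma hrincR_mul : (rincR (k := k) (A := A)) ∘ₗ LinearMap.mul' k A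
    = LinearMap.mul' k (A ⊗[k] A) ∘ₗ TensorProduct.map rincR rincR := by
  apply TensorProduct.ext'; intro x y; simp [Algebra.TensorProduct.tmul_mul_tmul]

lemma mul_rinc : LinearMap.mul' k (A ⊗[k] A) ∘ₗ
    TensorProduct.map (rincL (k := k) (A := A)) rincR = LinearMap.id := by
  apply TensorProduct.ext'; intro x y; simp [Algebra.TensorProduct.tmul_mul_tmul]

/-- `(f ⊗ g) ∘ Δ` as a `cmul`. -/
lemma tconv_eq {C : Type u} [AddCommGroup C] [Module k C] [Coalgebra k C]
    (f g : C →ₗ[k] A) :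
    TensorProduct.map f g ∘ₗ (Coalgebra.comul (R := k) (A := C))
      = cmul (rincL ∘ₗ f) (rincR ∘ₗ g) := by
  unfold cmul
  rw [TensorProduct.map_comp, LinearMap.comp_assoc,
    ← LinearMap.comp_assoc (TensorProduct.map f g ∘ₗ Coalgebra.comul)
      (TensorProduct.map rincL rincR) (LinearMap.mul' k (A ⊗[k] A)), mul_rinc]
  simp

lemma ι_comul : (Coalgebra.comul (R := k) (A := A)) ∘ₗ Algebra.linearMap k A
    = Algebra.linearMap k (A ⊗[k] A) := by
  apply LinearMap.ext; intro r
  simp [Algebra.algebraMap_eq_smul_one, Algebra.TensorProduct.one_def]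

lemma ι_counit : (Coalgebra.counit (R := k) (A := A)) ∘ₗ Algebra.linearMap k A
    = LinearMap.id := by
  apply LinearMap.ext; intro r
  simp [Algebra.algebraMap_eq_smul_one]

lemma rincL_ι : (rincL (k := k) (A := A)) ∘ₗ Algebra.linearMap k A
    = Algebra.linearMap k (A ⊗[k] A) := by
  apply LinearMap.ext; intro r
  simp [Algebra.algebraMap_eq_smul_one, Algebra.TensorProduct.one_def]

lemma rincR_ι : (rincR (k := k) (A := A)) ∘ₗ Algebra.linearMap k A
    = Algebra.linearMap k (A ⊗[k] A) := by
  apply LinearMap.ext; intro r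
  simp [Algebra.algebraMap_eq_smul_one, Algebra.TensorProduct.one_def]

lemma deform_eq_cmul (σ σ' : A ⊗[k] A →ₗ[k] k) (μ : A ⊗[k] A →ₗ[k] A) :
    deform σ μ σ' = cmul (cmul (Algebra.linearMap k A ∘ₗ σ) μ) (Algebra.linearMap k A ∘ₗ σ') := by
  unfold deform
  rw [convL_eq_cmul, convR_eq_cmul]

/-- `ι ∘ conv φ ψ = cmul (ι∘φ) (ι∘ψ)`. -/
lemma ι_conv {C : Type u} [AddCommGroup C] [Module k C] [Coalgebra k C]
    {B : Type u} [Ring B] [Algebra k B] (φ ψ : C →ₗ[k] k) :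
    Algebra.linearMap k B ∘ₗ conv φ ψ
      = cmul (Algebra.linearMap k B ∘ₗ φ) (Algebra.linearMap k B ∘ₗ ψ) := by
  rw [conv_eq_cmul]
  exact comp_cmul _ hι_mul φ ψ

end Hopf
section Hopf2
open Coalgebra LinearMap
variable {A : Type u} [Ring A] [HopfAlgebra k A]

lemma isCM_deform (σ σ' : A ⊗[k] A →ₗ[k] k)
    (h1 : conv σ σ' = Coalgebra.counit) (h2 : conv σ' σ = Coalgebra.counit) :
    IsCoalgMap (deform σ (LinearMap.mul' k A) σ') := by
  have hss : cmul (Algebra.linearMap k (A ⊗[k] A) ∘ₗ σ') (Algebra.linearMap k (A ⊗[k] A) ∘ₗ σ)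
      = Algebra.linearMap k (A ⊗[k] A) ∘ₗ Coalgebra.counit := by
    rw [← ι_conv, h2]
  constructor
  · have eL : Coalgebra.comul ∘ₗ deform σ (LinearMap.mul' k A) σ'
        = cmul (cmul (Algebra.linearMap k (A ⊗[k] A) ∘ₗ σ)
            (Coalgebra.comul ∘ₗ LinearMap.mul' k A))
            (Algebra.linearMap k (A ⊗[k] A) ∘ₗ σ') := by
      rw [deform_eq_cmul, comp_cmul _ hΔ_mul, comp_cmul _ hΔ_mul]
      simp only [← LinearMap.comp_assoc]
      rw [ι_comul]
    have hLdf : rincL ∘ₗ deform σ (LinearMap.mul' k A) σ'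
        = cmul (cmul (Algebra.linearMap k (A ⊗[k] A) ∘ₗ σ) (rincL ∘ₗ LinearMap.mul' k A))
            (Algebra.linearMap k (A ⊗[k] A) ∘ₗ σ') := by
      rw [deform_eq_cmul, comp_cmul (rincL (k := k) (A := A)) hrincL_mul, comp_cmul (rincL (k := k) (A := A)) hrincL_mul]
      simp only [← LinearMap.comp_assoc]
      rw [rincL_ι]
    have hRdf : rincR ∘ₗ deform σ (LinearMap.mul' k A) σ'
        = cmul (cmul (Algebra.linearMap k (A ⊗[k] A) ∘ₗ σ) (rincR ∘ₗ LinearMap.mul' k A))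
            (Algebra.linearMap k (A ⊗[k] A) ∘ₗ σ') := by
      rw [deform_eq_cmul, comp_cmul (rincR (k := k) (A := A)) hrincR_mul, comp_cmul (rincR (k := k) (A := A)) hrincR_mul]
      simp only [← LinearMap.comp_assoc]
      rw [rincR_ι]
    have hmid : cmul (rincL ∘ₗ LinearMap.mul' k A) (rincR ∘ₗ LinearMap.mul' k A)
        = Coalgebra.comul ∘ₗ LinearMap.mul' k A := by
      rw [← tconv_eq]
      exact (isCM_mul (k := k) (A := A)).1.symm
    rw [eL, tconv_eq, hLdf, hRdf]
    rw [cmul_assoc (cmul (Algebra.linearMap k (A ⊗[k] A) ∘ₗ σ) (rincL ∘ₗ LinearMap.mul' k A))]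
    rw [cmul_assoc (Algebra.linearMap k (A ⊗[k] A) ∘ₗ σ) (rincR ∘ₗ LinearMap.mul' k A)]
    rw [← cmul_assoc (Algebra.linearMap k (A ⊗[k] A) ∘ₗ σ')]
    rw [hss, cmul_one_left]
    rw [cmul_assoc (Algebra.linearMap k (A ⊗[k] A) ∘ₗ σ) (rincL ∘ₗ LinearMap.mul' k A)
      (cmul (rincR ∘ₗ LinearMap.mul' k A) (Algebra.linearMap k (A ⊗[k] A) ∘ₗ σ'))]
    rw [← cmul_assoc (rincL ∘ₗ LinearMap.mul' k A) (rincR ∘ₗ LinearMap.mul' k A)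
      (Algebra.linearMap k (A ⊗[k] A) ∘ₗ σ')]
    rw [hmid, cmul_assoc]
  · rw [deform_eq_cmul, comp_cmul _ hε_mul, comp_cmul _ hε_mul]
    simp only [← LinearMap.comp_assoc]
    rw [ι_counit, hεμ_counit]
    simp only [LinearMap.id_comp]
    rw [← conv_eq_cmul, ← conv_eq_cmul, conv_counit_right, h1]

end Hopf2
section Assembly
open Coalgebra LinearMap
variable {A : Type u} [Ring A] [HopfAlgebra k A]

lemma conv_assoc {C : Type u} [AddCommGroup C] [Module k C] [Coalgebra k C]
    (f g h : C →ₗ[k] k) : conv (conv f g) h = conv f (conv g h) :=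
  cmul_assoc f g h

/-- `x ⊗ y ⊗ z ↦ ε(z) • (x ⊗ y)`. -/
noncomputable def PT : (A ⊗[k] A) ⊗[k] A →ₗ[k] A ⊗[k] A :=
  (TensorProduct.rid k (A ⊗[k] A)).toLinearMap ∘ₗ
    TensorProduct.map LinearMap.id (Coalgebra.counit (R := k) (A := A))

/-- `x ⊗ y ⊗ z ↦ ε(x) • (y ⊗ z)`. -/
noncomputable def PS : (A ⊗[k] A) ⊗[k] A →ₗ[k] A ⊗[k] A :=
  ((TensorProduct.lid k (A ⊗[k] A)).toLinearMap ∘ₗ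
    TensorProduct.map (Coalgebra.counit (R := k) (A := A)) LinearMap.id) ∘ₗ
    (TensorProduct.assoc k A A A).toLinearMap

lemma isCM_PT : IsCoalgMap (PT (k := k) (A := A)) :=
  IsCoalgMap.comp isCM_rid (isCM_map isCM_id isCM_counit)

lemma isCM_PS : IsCoalgMap (PS (k := k) (A := A)) :=
  IsCoalgMap.comp (IsCoalgMap.comp isCM_lid (isCM_map isCM_counit isCM_id)) isCM_assoc

lemma T_eq (φ : A ⊗[k] A →ₗ[k] k) :
    LinearMap.mul' k k ∘ₗ TensorProduct.map φ (Coalgebra.counit (R := k) (A := A))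
      = φ ∘ₗ PT := by
  apply TensorProduct.ext_threefold; intro x y z
  simp [PT, mul_comm]

lemma S_eq (φ : A ⊗[k] A →ₗ[k] k) :
    (LinearMap.mul' k k ∘ₗ TensorProduct.map (Coalgebra.counit (R := k) (A := A)) φ) ∘ₗ
        (TensorProduct.assoc k A A A).toLinearMap
      = φ ∘ₗ PS := by
  apply TensorProduct.ext_threefold; intro x y z
  simp [PS]

lemma map_unit_unit {C D B B' : Type u} [AddCommGroup C] [Module k C] [Coalgebra k C]
    [AddCommGroup D] [Module k D] [Coalgebra k D] [Ring B] [Algebra k B]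
    [Ring B'] [Algebra k B'] (φ : C →ₗ[k] k) (ψ : D →ₗ[k] k) :
    TensorProduct.map (Algebra.linearMap k B ∘ₗ φ) (Algebra.linearMap k B' ∘ₗ ψ)
      = Algebra.linearMap k (B ⊗[k] B') ∘ₗ (LinearMap.mul' k k ∘ₗ TensorProduct.map φ ψ) := by
  apply TensorProduct.ext'; intro x y
  simp only [TensorProduct.map_tmul, LinearMap.coe_comp, Function.comp_apply,
    Algebra.linearMap_apply, LinearMap.mul'_apply, Algebra.algebraMap_eq_smul_one,
    Algebra.TensorProduct.one_def]
  rw [TensorProduct.smul_tmul', TensorProduct.tmul_smul, TensorProduct.smul_tmul',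
    smul_smul, mul_comm]

end Assembly
section Decomp
open Coalgebra LinearMap
variable {A : Type u} [Ring A] [HopfAlgebra k A]

lemma Qdecomp (σ σinv φ : A ⊗[k] A →ₗ[k] k) :
    φ ∘ₗ TensorProduct.map (deform σ (LinearMap.mul' k A) σinv) LinearMap.id
      = conv (conv (σ ∘ₗ PT) (φ ∘ₗ TensorProduct.map (LinearMap.mul' k A) LinearMap.id))
          (σinv ∘ₗ PT) := by
  rw [deform_eq_cmul, map_cmul_unit_left, map_cmul_unit_right,
    map_unit_unit σ Coalgebra.counit, map_unit_unit σinv Coalgebra.counit,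
    T_eq σ, T_eq σinv, comp_cmul_unit_right, comp_cmul_unit_left]

lemma Rdecomp (σ σinv φ : A ⊗[k] A →ₗ[k] k) :
    (φ ∘ₗ TensorProduct.map LinearMap.id (deform σ (LinearMap.mul' k A) σinv)) ∘ₗ
        (TensorProduct.assoc k A A A).toLinearMap
      = conv (conv (σ ∘ₗ PS)
          ((φ ∘ₗ TensorProduct.map LinearMap.id (LinearMap.mul' k A)) ∘ₗ
            (TensorProduct.assoc k A A A).toLinearMap))
          (σinv ∘ₗ PS) := by
  rw [deform_eq_cmul, map_id_cmul_unit_right, map_id_cmul_unit_left,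
    map_unit_unit Coalgebra.counit σ, map_unit_unit Coalgebra.counit σinv,
    comp_cmul_unit_right, comp_cmul_unit_left,
    conv_comp _ _ isCM_assoc, conv_comp _ _ isCM_assoc, S_eq σ, S_eq σinv]

end Decomp

section Chains
variable {M : Type u}

lemma chain_inner (op : M → M → M) (e : M)
    (ha : ∀ a b c, op (op a b) c = op a (op b c)) (hl : ∀ a, op e a = a)
    (p pi w v : M) (h : op pi p = e) : op pi (op (op p w) v) = op w v := by
  rw [ha p w v, ← ha pi p (op w v), h, hl]

lemma chain_main (op : M → M → M) (e : M)
    (ha : ∀ a b c, op (op a b) c = op a (op b c)) (hl : ∀ a, op e a = a)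
    (a ai sa sai bt sbt x xi y yi : M)
    (h1 : op ai a = e) (h4 : op sai sa = e)
    (hc : op bt x = op sbt y) (hic : op xi ai = op yi sai) :
    op (op bt ai) (op (op (op a x) ai) (op (op a xi) ai))
      = op (op sbt sai) (op (op (op sa y) sai) (op (op sa yi) sai)) := by
  rw [ha (op a x) ai (op (op a xi) ai), chain_inner op e ha hl a ai xi ai h1,
    ha bt ai (op (op a x) (op xi ai)), chain_inner op e ha hl a ai x (op xi ai) h1, hic,
    ha (op sa y) sai (op (op sa yi) sai), chain_inner op e ha hl sa sai yi sai h4,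
    ha sbt sai (op (op sa y) (op yi sai)), chain_inner op e ha hl sa sai y (op yi sai) h4,
    ← ha bt x (op yi sai), ← ha sbt y (op yi sai), hc]

lemma chain_deform (op : M → M → M) (e : M)
    (ha : ∀ a b c, op (op a b) c = op a (op b c)) (hl : ∀ a, op e a = a)
    (t i s m d : M) (h : op i s = e) :
    op (op (op t i) (op (op s m) i)) (op s d) = op (op t m) d := by
  rw [ha t i (op (op s m) i), chain_inner op e ha hl s i m i h,
    ha t (op m i) (op s d), ha m i (op s d), ← ha i s d, h, hl, ← ha t m d]

lemma inv_unique' (op : M → M → M) (e : M)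
    (ha : ∀ a b c, op (op a b) c = op a (op b c)) (hl : ∀ a, op e a = a)
    (hr : ∀ a, op a e = a) (b u c : M) (hbu : op b u = e) (huc : op u c = e) :
    b = c := by
  have : op b (op u c) = op (op b u) c := (ha b u c).symm
  rw [huc, hr] at this
  rw [this, hbu, hl]

lemma inv_cocycle (op : M → M → M) (e : M)
    (ha : ∀ a b c, op (op a b) c = op a (op b c)) (hl : ∀ a, op e a = a)
    (hr : ∀ a, op a e = a) (a ai xσ xi sa sai yσ yi : M)
    (h : op a xσ = op sa yσ) (h1 : op ai a = e) (hx : op xi xσ = e)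
    (hy : op yσ yi = e) (hs : op sa sai = e) :
    op xi ai = op yi sai := by
  apply inv_unique' op e ha hl hr _ (op a xσ) _
  · rw [ha xi ai (op a xσ), ← ha ai a xσ, h1, hl, hx]
  · rw [h, ha sa yσ (op yi sai), ← ha yσ yi sai, hy, hl, hs]
end Chains

/- STATEMENT 1: If `σ, σ̃` are convolution-invertible unital 2-cocycles on a Hopf algebra `A`,
then `ρ := σ̃ * σ⁻¹` is a convolution-invertible unital 2-cocycle for the deformed Hopf
algebra `A_σ`, and deforming `A_σ` by `ρ` gives back `A_{σ̃}` (same coalgebra, and the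
`ρ`-deformation of the multiplication of `A_σ` is the multiplication of `A_{σ̃}`). -/
theorem cocycle_quotient_is_cocycle_for_deformation {A : Type u} [Ring A] [HopfAlgebra k A]
    (σ σinv σt σtinv : A ⊗[k] A →ₗ[k] k)
    (hσinv : conv σ σinv = Coalgebra.counit ∧ conv σinv σ = Coalgebra.counit)
    (hσtinv : conv σt σtinv = Coalgebra.counit ∧ conv σtinv σt = Coalgebra.counit)
    (hσ1 : σ (1 ⊗ₜ[k] 1) = 1) (hσt1 : σt (1 ⊗ₜ[k] 1) = 1)
    (hσ : IsCocycle (LinearMap.mul' k A) σ) (hσt : IsCocycle (LinearMap.mul' k A) σt) :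
    IsCocycle (deform σ (LinearMap.mul' k A) σinv) (conv σt σinv) ∧
    (conv σt σinv) (1 ⊗ₜ[k] 1) = 1 ∧
    ∃ ρinv : A ⊗[k] A →ₗ[k] k,
      conv (conv σt σinv) ρinv = Coalgebra.counit ∧
      conv ρinv (conv σt σinv) = Coalgebra.counit ∧
      deform (conv σt σinv) (deform σ (LinearMap.mul' k A) σinv) ρinv =
        deform σt (LinearMap.mul' k A) σtinv := by
  
  have hPT := isCM_PT (k := k) (A := A)
  have hPS := isCM_PS (k := k) (A := A)
  have hQ0 : IsCoalgMap (TensorProduct.map (LinearMap.mul' k A) (LinearMap.id : A →ₗ[k] A)) :=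
    isCM_map isCM_mul isCM_id
  have hR0 : IsCoalgMap ((TensorProduct.map (LinearMap.id : A →ₗ[k] A) (LinearMap.mul' k A)) ∘ₗ
      (TensorProduct.assoc k A A A).toLinearMap) :=
    IsCoalgMap.comp (isCM_map isCM_id isCM_mul) isCM_assoc
  have hmu : IsCoalgMap (deform σ (LinearMap.mul' k A) σinv) :=
    isCM_deform σ σinv hσinv.1 hσinv.2
  have hQ : IsCoalgMap (TensorProduct.map (deform σ (LinearMap.mul' k A) σinv)
      (LinearMap.id : A →ₗ[k] A)) := isCM_map hmu isCM_id
  have hRp : IsCoalgMap (TensorProduct.map (LinearMap.id : A →ₗ[k] A)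
      (deform σ (LinearMap.mul' k A) σinv)) := isCM_map isCM_id hmu
  -- cancellation facts
  have c1 : conv (σinv ∘ₗ PT) (σ ∘ₗ PT) = Coalgebra.counit := by
    rw [← conv_comp σinv σ hPT, hσinv.2, hPT.2]
  have c4 : conv (σinv ∘ₗ PS) (σ ∘ₗ PS) = Coalgebra.counit := by
    rw [← conv_comp σinv σ hPS, hσinv.2, hPS.2]
  have c5 : conv (σ ∘ₗ PS) (σinv ∘ₗ PS) = Coalgebra.counit := by
    rw [← conv_comp σ σinv hPS, hσinv.1, hPS.2]
  have hx : conv (σinv ∘ₗ TensorProduct.map (LinearMap.mul' k A) LinearMap.id)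
      (σ ∘ₗ TensorProduct.map (LinearMap.mul' k A) LinearMap.id) = Coalgebra.counit := by
    rw [← conv_comp σinv σ hQ0, hσinv.2, hQ0.2]
  have hy : conv ((σ ∘ₗ TensorProduct.map LinearMap.id (LinearMap.mul' k A)) ∘ₗ
        (TensorProduct.assoc k A A A).toLinearMap)
      ((σinv ∘ₗ TensorProduct.map LinearMap.id (LinearMap.mul' k A)) ∘ₗ
        (TensorProduct.assoc k A A A).toLinearMap) = Coalgebra.counit := by
    rw [LinearMap.comp_assoc, LinearMap.comp_assoc, ← conv_comp σ σinv hR0, hσinv.1, hR0.2]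
  -- rewritten cocycle hypotheses
  have hσ' : conv (σ ∘ₗ PT) (σ ∘ₗ TensorProduct.map (LinearMap.mul' k A) LinearMap.id)
      = conv (σ ∘ₗ PS) ((σ ∘ₗ TensorProduct.map LinearMap.id (LinearMap.mul' k A)) ∘ₗ
          (TensorProduct.assoc k A A A).toLinearMap) := by
    have h := hσ
    unfold IsCocycle at h
    rw [T_eq σ, S_eq σ] at h
    rw [LinearMap.comp_assoc]
    exact h
  have hσt' : conv (σt ∘ₗ PT) (σt ∘ₗ TensorProduct.map (LinearMap.mul' k A) LinearMap.id)
      = conv (σt ∘ₗ PS) ((σt ∘ₗ TensorProduct.map LinearMap.id (LinearMap.mul' k A)) ∘ₗ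
          (TensorProduct.assoc k A A A).toLinearMap) := by
    have h := hσt
    unfold IsCocycle at h
    rw [T_eq σt, S_eq σt] at h
    rw [LinearMap.comp_assoc]
    exact h
  have hic : conv (σinv ∘ₗ TensorProduct.map (LinearMap.mul' k A) LinearMap.id) (σinv ∘ₗ PT)
      = conv ((σinv ∘ₗ TensorProduct.map LinearMap.id (LinearMap.mul' k A)) ∘ₗ
          (TensorProduct.assoc k A A A).toLinearMap) (σinv ∘ₗ PS) :=
    inv_cocycle conv Coalgebra.counit conv_assoc conv_counit_left conv_counit_right
      (σ ∘ₗ PT) (σinv ∘ₗ PT)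
      (σ ∘ₗ TensorProduct.map (LinearMap.mul' k A) LinearMap.id)
      (σinv ∘ₗ TensorProduct.map (LinearMap.mul' k A) LinearMap.id)
      (σ ∘ₗ PS) (σinv ∘ₗ PS)
      ((σ ∘ₗ TensorProduct.map LinearMap.id (LinearMap.mul' k A)) ∘ₗ
        (TensorProduct.assoc k A A A).toLinearMap)
      ((σinv ∘ₗ TensorProduct.map LinearMap.id (LinearMap.mul' k A)) ∘ₗ
        (TensorProduct.assoc k A A A).toLinearMap)
      hσ' c1 hx hy c5
  refine ⟨?_, ?_, conv σ σtinv, ?_, ?_, ?_⟩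
  · -- goal 1: the cocycle condition for ρ on the deformed algebra
    unfold IsCocycle
    rw [T_eq (conv σt σinv), S_eq (conv σt σinv)]
    rw [conv_comp σt σinv hPT, conv_comp σt σinv hPS]
    rw [conv_comp σt σinv hQ]
    rw [Qdecomp σ σinv σt, Qdecomp σ σinv σinv]
    rw [← LinearMap.comp_assoc (TensorProduct.assoc k A A A).toLinearMap
      (TensorProduct.map LinearMap.id (deform σ (LinearMap.mul' k A) σinv)) (conv σt σinv)]
    rw [conv_comp σt σinv hRp]
    rw [conv_comp _ _ (isCM_assoc (k := k) (C := A) (D := A) (D' := A))]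
    rw [Rdecomp σ σinv σt, Rdecomp σ σinv σinv]
    exact chain_main conv Coalgebra.counit conv_assoc conv_counit_left
      (σ ∘ₗ PT) (σinv ∘ₗ PT) (σ ∘ₗ PS) (σinv ∘ₗ PS) (σt ∘ₗ PT) (σt ∘ₗ PS)
      (σt ∘ₗ TensorProduct.map (LinearMap.mul' k A) LinearMap.id)
      (σinv ∘ₗ TensorProduct.map (LinearMap.mul' k A) LinearMap.id)
      ((σt ∘ₗ TensorProduct.map LinearMap.id (LinearMap.mul' k A)) ∘ₗ
        (TensorProduct.assoc k A A A).toLinearMap)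
      ((σinv ∘ₗ TensorProduct.map LinearMap.id (LinearMap.mul' k A)) ∘ₗ
        (TensorProduct.assoc k A A A).toLinearMap)
      c1 c4 hσt' hic
  · -- goal 2: normalization
    have hcom : (Coalgebra.comul (R := k) (A := A ⊗[k] A)) ((1:A) ⊗ₜ[k] (1:A))
        = ((1:A) ⊗ₜ[k] (1:A)) ⊗ₜ[k] ((1:A) ⊗ₜ[k] (1:A)) := by
      rw [comul_tmul_def]
      simp only [LinearMap.coe_comp, Function.comp_apply, TensorProduct.map_tmul,
        LinearEquiv.coe_coe, Bialgebra.comul_one, Algebra.TensorProduct.one_def]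
      simp
    have hcou : (Coalgebra.counit (R := k) (A := A ⊗[k] A)) ((1:A) ⊗ₜ[k] (1:A)) = 1 := by
      rw [counit_tmul_def]; simp
    have hσinv1 : σinv ((1:A) ⊗ₜ[k] (1:A)) = 1 := by
      have h := LinearMap.congr_fun hσinv.1 ((1:A) ⊗ₜ[k] (1:A))
      simp only [conv, LinearMap.coe_comp, Function.comp_apply, hcom, hcou,
        TensorProduct.map_tmul, LinearMap.mul'_apply, hσ1, one_mul] at h
      exact h
    simp only [conv, LinearMap.coe_comp, Function.comp_apply, hcom, hcou,
      TensorProduct.map_tmul, LinearMap.mul'_apply, hσt1, hσinv1, one_mul]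
  · rw [conv_assoc σt σinv (conv σ σtinv), ← conv_assoc σinv σ σtinv, hσinv.2,
      conv_counit_left, hσtinv.1]
  · rw [conv_assoc σ σtinv (conv σt σinv), ← conv_assoc σtinv σt σinv, hσtinv.2,
      conv_counit_left, hσinv.1]
  · -- goal 5: the composed deformation
    rw [deform_eq_cmul (conv σt σinv) (conv σ σtinv), deform_eq_cmul σ σinv,
      deform_eq_cmul σt σtinv, ι_conv σt σinv, ι_conv σ σtinv]
    have hinv : cmul (Algebra.linearMap k A ∘ₗ σinv) (Algebra.linearMap k A ∘ₗ σ)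
        = Algebra.linearMap k A ∘ₗ Coalgebra.counit := by
      rw [← ι_conv, hσinv.2]
    exact chain_deform cmul (Algebra.linearMap k A ∘ₗ Coalgebra.counit) cmul_assoc
      cmul_one_left (Algebra.linearMap k A ∘ₗ σt) (Algebra.linearMap k A ∘ₗ σinv)
      (Algebra.linearMap k A ∘ₗ σ) (LinearMap.mul' k A) (Algebra.linearMap k A ∘ₗ σtinv) hinv
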